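/- arXiv:1705.03801 — 2 statements merged into one kernel-verified Lean document; each statement's English description precedes it below -/
import Mathlib

section
/- Let M_1, M_2, … be nonnegative real random variables and for each i let X_i be mixed Poisson with mixing variable M_i, i.e. the law of X_i is given by P(X_i = j) = E[e^{−M_i} M_i^j / j!] for j ∈ ℕ. If M_i converges in distribution to a constant λ ∈ [0,∞), then the total variation distance between the law of X_i and the Poisson(λ) distribution converges to 0 as i → ∞, i.e. (1/2) Σ_{j=0}^∞ | P(X_i = j) − e^{−λ} λ^j / j! | → 0. -/
open MeasureTheory ProbabilityTheory Filter Topology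
open scoped NNReal ENNReal

namespace MixedPoissonAux

/-- Poisson pmf term. -/
noncomputable def pois (x : ℝ) (j : ℕ) : ℝ := Real.exp (-x) * x ^ j / (Nat.factorial j)

lemma tsum_pow_div_factorial (x : ℝ) : ∑' j : ℕ, x ^ j / (Nat.factorial j : ℝ) = Real.exp x := by
  rw [Real.exp_eq_exp_ℝ, NormedSpace.exp_eq_tsum_div]

lemma summable_pois (x : ℝ) : Summable (fun j : ℕ => pois x j) := by
  simpa [pois, mul_div_assoc] using (Real.summable_pow_div_factorial x).mul_left (Real.exp (-x))

lemma tsum_pois (x : ℝ) : ∑' j : ℕ, pois x j = 1 := by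
  simp only [pois, mul_div_assoc]
  rw [tsum_mul_left, tsum_pow_div_factorial, ← Real.exp_add]
  simp

lemma pois_nonneg {x : ℝ} (hx : 0 ≤ x) (j : ℕ) : 0 ≤ pois x j := by
  unfold pois
  positivity

lemma pois_le_one {x : ℝ} (hx : 0 ≤ x) (j : ℕ) : pois x j ≤ 1 := by
  rw [← tsum_pois x]
  exact Summable.le_tsum (summable_pois x) j (fun i _ => pois_nonneg hx i)

lemma abs_pow_sub_pow_le {x y : ℝ} (hx : 0 ≤ x) (hy : 0 ≤ y) (n : ℕ) :
    |x ^ n - y ^ n| ≤ n * max x y ^ (n - 1) * |x - y| := by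
  rw [← geom_sum₂_mul, abs_mul]
  gcongr
  calc |∑ i ∈ Finset.range n, x ^ i * y ^ (n - 1 - i)|
      ≤ ∑ i ∈ Finset.range n, |x ^ i * y ^ (n - 1 - i)| := Finset.abs_sum_le_sum_abs _ _
    _ ≤ ∑ _i ∈ Finset.range n, max x y ^ (n - 1) := by
        refine Finset.sum_le_sum fun i hi => ?_
        rw [abs_mul, abs_pow, abs_pow, abs_of_nonneg hx, abs_of_nonneg hy]
        have hin : i + (n - 1 - i) = n - 1 := by
          have := Finset.mem_range.mp hi; omega
        calc x ^ i * y ^ (n - 1 - i)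
            ≤ max x y ^ i * max x y ^ (n - 1 - i) :=
              mul_le_mul (pow_le_pow_left₀ hx (le_max_left _ _) i)
                (pow_le_pow_left₀ hy (le_max_right _ _) _) (by positivity)
                (by positivity)
          _ = max x y ^ (n - 1) := by rw [← pow_add, hin]
    _ = n * max x y ^ (n - 1) := by rw [Finset.sum_const, Finset.card_range, nsmul_eq_mul]

lemma summable_jpow (m : ℝ) : Summable (fun j : ℕ => (j : ℝ) * m ^ (j - 1) / (Nat.factorial j)) := by
  rw [← summable_nat_add_iff 1]
  have : (fun n : ℕ => ((n + 1 : ℕ) : ℝ) * m ^ (n + 1 - 1) / (Nat.factorial (n + 1)))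
      = fun n : ℕ => m ^ n / (Nat.factorial n) := by
    funext n
    have h0 : (Nat.factorial n : ℝ) ≠ 0 := Nat.cast_ne_zero.mpr (Nat.factorial_ne_zero n)
    rw [Nat.add_sub_cancel, Nat.factorial_succ]
    push_cast
    field_simp
  rw [this]
  exact Real.summable_pow_div_factorial m

lemma tsum_jpow (m : ℝ) : ∑' j : ℕ, (j : ℝ) * m ^ (j - 1) / (Nat.factorial j) = Real.exp m := by
  rw [Summable.tsum_eq_zero_add (summable_jpow m)]
  have : (fun n : ℕ => ((n + 1 : ℕ) : ℝ) * m ^ (n + 1 - 1) / (Nat.factorial (n + 1)))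
      = fun n : ℕ => m ^ n / (Nat.factorial n) := by
    funext n
    have h0 : (Nat.factorial n : ℝ) ≠ 0 := Nat.cast_ne_zero.mpr (Nat.factorial_ne_zero n)
    rw [Nat.add_sub_cancel, Nat.factorial_succ]
    push_cast
    field_simp
  simp only [this, Nat.cast_zero, zero_mul, zero_div, zero_add]
  exact tsum_pow_div_factorial m

lemma summable_abs_sub (x lam : ℝ) :
    Summable (fun j : ℕ => |pois x j - pois lam j|) := by
  have h : ∀ j : ℕ, |pois x j - pois lam j| ≤ |pois x j| + |pois lam j| := fun j =>
    abs_sub _ _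
  exact Summable.of_nonneg_of_le (fun j => abs_nonneg _) h
    (((summable_pois x).abs).add ((summable_pois lam).abs))

lemma keyA {x lam : ℝ} (hx : 0 ≤ x) (hl : 0 ≤ lam) :
    ∑' j : ℕ, |pois x j - pois lam j| ≤ 2 := by
  have h : ∀ j : ℕ, |pois x j - pois lam j| ≤ pois x j + pois lam j := fun j => by
    rw [abs_sub_le_iff]
    constructor
    · linarith [pois_nonneg hl j, pois_nonneg hx j]
    · linarith [pois_nonneg hl j, pois_nonneg hx j]
  calc ∑' j : ℕ, |pois x j - pois lam j|
      ≤ ∑' j : ℕ, (pois x j + pois lam j) :=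
        Summable.tsum_le_tsum h (summable_abs_sub x lam) ((summable_pois x).add (summable_pois lam))
    _ = 2 := by rw [Summable.tsum_add (summable_pois x) (summable_pois lam), tsum_pois, tsum_pois]; norm_num

lemma keyB {x lam : ℝ} (hx : 0 ≤ x) (hl : 0 ≤ lam) (hd : |x - lam| ≤ 1) :
    ∑' j : ℕ, |pois x j - pois lam j| ≤ 5 * |x - lam| := by
  set m := max x lam with hm
  have hm1 : m ≤ lam + 1 := by
    rcases abs_sub_le_iff.mp hd with ⟨h1, _⟩
    exact max_le (by linarith) (by linarith)
  -- termwise bound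
  have hterm : ∀ j : ℕ, |pois x j - pois lam j| ≤
      |Real.exp (-x) - Real.exp (-lam)| * (x ^ j / (Nat.factorial j))
      + Real.exp (-lam) * (((j : ℝ) * m ^ (j - 1) / (Nat.factorial j)) * |x - lam|) := by
    intro j
    have hdecomp : pois x j - pois lam j =
        (Real.exp (-x) - Real.exp (-lam)) * (x ^ j / (Nat.factorial j))
        + Real.exp (-lam) * ((x ^ j - lam ^ j) / (Nat.factorial j)) := by
      simp only [pois]; ring
    rw [hdecomp]
    refine (abs_add_le _ _).trans ?_
    gcongr
    · rw [abs_mul]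
      gcongr
      rw [abs_of_nonneg (by positivity)]
    · rw [abs_mul, abs_of_nonneg (Real.exp_pos (-lam)).le]
      gcongr
      rw [abs_div, abs_of_nonneg (by positivity : (0:ℝ) ≤ (Nat.factorial j : ℝ))]
      rw [div_mul_eq_mul_div]
      gcongr
      exact abs_pow_sub_pow_le hx hl j
  -- summability of the bound
  have hs1 : Summable (fun j : ℕ => |Real.exp (-x) - Real.exp (-lam)| * (x ^ j / (Nat.factorial j))) :=
    (Real.summable_pow_div_factorial x).mul_left _
  have hs2 : Summable (fun j : ℕ =>
      Real.exp (-lam) * (((j : ℝ) * m ^ (j - 1) / (Nat.factorial j)) * |x - lam|)) :=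
    ((summable_jpow m).mul_right _).mul_left _
  have hle := Summable.tsum_le_tsum hterm (summable_abs_sub x lam) (hs1.add hs2)
  rw [Summable.tsum_add hs1 hs2, tsum_mul_left, tsum_mul_left, tsum_pow_div_factorial,
    tsum_mul_right, tsum_jpow] at hle
  refine hle.trans ?_
  have e1 : |Real.exp (-x) - Real.exp (-lam)| * Real.exp x ≤ 2 * |x - lam| := by
    have heq : |Real.exp (-x) - Real.exp (-lam)| * Real.exp x = |Real.exp (x - lam) - 1| := by
      rw [← abs_of_nonneg (Real.exp_pos x).le, ← abs_mul, sub_mul, ← Real.exp_add,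
        ← Real.exp_add, neg_add_cancel, Real.exp_zero, abs_sub_comm]
      congr 2
      ring
    rw [heq]
    exact Real.abs_exp_sub_one_le hd
  have e2 : Real.exp (-lam) * (Real.exp m * |x - lam|) ≤ 3 * |x - lam| := by
    have h1 : Real.exp (-lam) * Real.exp m = Real.exp (m - lam) := by
      rw [← Real.exp_add]; ring_nf
    have h2 : Real.exp (m - lam) ≤ Real.exp 1 := Real.exp_le_exp.mpr (by linarith)
    have h3 : Real.exp 1 ≤ 3 := by
      have := Real.exp_one_lt_d9
      linarith
    calc Real.exp (-lam) * (Real.exp m * |x - lam|)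
        = (Real.exp (-lam) * Real.exp m) * |x - lam| := by ring
      _ ≤ 3 * |x - lam| := by
          rw [h1]
          gcongr
          exact h2.trans h3
  linarith

lemma key {x lam : ℝ} (hx : 0 ≤ x) (hl : 0 ≤ lam) :
    ∑' j : ℕ, |pois x j - pois lam j| ≤ min 2 (5 * |x - lam|) := by
  by_cases hd : |x - lam| ≤ 1
  · exact le_min (keyA hx hl) (keyB hx hl hd)
  · have : min 2 (5 * |x - lam|) = 2 := by
      rw [min_eq_left]
      nlinarith [abs_nonneg (x - lam)]
    rw [this]
    exact keyA hx hl

end MixedPoissonAux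

open MixedPoissonAux in
/-- **Convergence of mixed Poisson random variables.** -/
theorem mixedPoisson_tendsto_of_tendsto_const
    {Ω : Type*} [MeasurableSpace Ω] (P : Measure Ω) [IsProbabilityMeasure P]
    (M : ℕ → Ω → ℝ) (hMmeas : ∀ i, Measurable (M i)) (hMnn : ∀ i ω, 0 ≤ M i ω)
    (lam : ℝ) (hlam : 0 ≤ lam)
    (hconv : ∀ f : BoundedContinuousFunction ℝ ℝ,
      Tendsto (fun i => ∫ ω, f (M i ω) ∂P) atTop (𝓝 (f lam))) :
    Tendsto (fun i => (1 / 2 : ℝ) * ∑' j : ℕ,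
        |(∫ ω, Real.exp (-(M i ω)) * (M i ω) ^ j / (Nat.factorial j) ∂P)
          - Real.exp (-lam) * lam ^ j / (Nat.factorial j)|)
      atTop (𝓝 0) := by
  classical
  simp only [show ∀ (y : ℝ) (j : ℕ),
      Real.exp (-y) * y ^ j / (Nat.factorial j) = pois y j from fun _ _ => rfl]
  -- the bounding bounded continuous function
  set h : ℝ → ℝ := fun x => min 2 (5 * |x - lam|) with hh
  have hcont : Continuous h := by
    apply Continuous.min continuous_const
    continuity
  have hnn : ∀ x, 0 ≤ h x := fun x => le_min (by norm_num) (by positivity)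
  have hbd : ∀ x, ‖h x‖ ≤ 2 := fun x => by
    rw [Real.norm_eq_abs, abs_of_nonneg (hnn x)]
    exact min_le_left _ _
  set H : BoundedContinuousFunction ℝ ℝ :=
    BoundedContinuousFunction.ofNormedAddCommGroup h hcont 2 hbd with hH
  have hHcoe : ∀ x, H x = h x := fun x => rfl
  have hHlam : H lam = 0 := by
    rw [hHcoe]
    simp [hh]
  -- integrability facts for each i
  have hint : ∀ i, Integrable (fun ω => h (M i ω)) P := by
    intro i
    refine (integrable_const (2 : ℝ)).mono' ?_ ?_
    · exact (hcont.measurable.comp (hMmeas i)).aestronglyMeasurable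
    · exact Filter.Eventually.of_forall fun ω => hbd _
  have hintj : ∀ i j, Integrable (fun ω => pois (M i ω) j) P := by
    intro i j
    refine (integrable_const (1 : ℝ)).mono' ?_ ?_
    · apply Measurable.aestronglyMeasurable
      apply Measurable.div
      · exact ((Real.measurable_exp.comp (hMmeas i).neg).mul ((hMmeas i).pow_const j))
      · exact measurable_const
    · refine Filter.Eventually.of_forall fun ω => ?_
      rw [Real.norm_eq_abs, abs_of_nonneg (pois_nonneg (hMnn i ω) j)]
      exact pois_le_one (hMnn i ω) j
  -- the pointwise tsum is bounded by the integral of h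
  have hbound : ∀ i, ∑' j : ℕ,
      |(∫ ω, pois (M i ω) j ∂P) - pois lam j|
      ≤ ∫ ω, h (M i ω) ∂P := by
    intro i
    have hterm : ∀ j : ℕ,
        |(∫ ω, pois (M i ω) j ∂P) - pois lam j|
        ≤ ∫ ω, |pois (M i ω) j - pois lam j| ∂P := by
      intro j
      have hc : (∫ ω, pois (M i ω) j ∂P) - pois lam j
          = ∫ ω, (pois (M i ω) j - pois lam j) ∂P := by
        rw [integral_sub (hintj i j) (integrable_const _), integral_const]
        simp
      rw [hc]
      calc |∫ ω, (pois (M i ω) j - pois lam j) ∂P|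
          ≤ ∫ ω, ‖pois (M i ω) j - pois lam j‖ ∂P := by
            rw [← Real.norm_eq_abs]
            exact norm_integral_le_integral_norm _
        _ = ∫ ω, |pois (M i ω) j - pois lam j| ∂P := by simp [Real.norm_eq_abs]
    -- finset sums bounded
    have hsum : ∀ s : Finset ℕ, ∑ j ∈ s,
        |(∫ ω, pois (M i ω) j ∂P) - pois lam j|
        ≤ ∫ ω, h (M i ω) ∂P := by
      intro s
      have h1 : ∑ j ∈ s,
          |(∫ ω, pois (M i ω) j ∂P) - pois lam j|
          ≤ ∑ j ∈ s, ∫ ω, |pois (M i ω) j - pois lam j| ∂P :=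
        Finset.sum_le_sum fun j _ => hterm j
      have hintabs : ∀ j : ℕ, Integrable (fun ω => |pois (M i ω) j - pois lam j|) P :=
        fun j => ((hintj i j).sub (integrable_const _)).abs
      have h2 : ∑ j ∈ s, ∫ ω, |pois (M i ω) j - pois lam j| ∂P
          = ∫ ω, ∑ j ∈ s, |pois (M i ω) j - pois lam j| ∂P :=
        (integral_finset_sum s fun j _ => hintabs j).symm
      have h3 : ∫ ω, ∑ j ∈ s, |pois (M i ω) j - pois lam j| ∂P ≤ ∫ ω, h (M i ω) ∂P := by
        refine integral_mono (integrable_finset_sum s fun j _ => hintabs j) (hint i) ?_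
        intro ω
        calc ∑ j ∈ s, |pois (M i ω) j - pois lam j|
            ≤ ∑' j : ℕ, |pois (M i ω) j - pois lam j| :=
              Summable.sum_le_tsum s (fun j _ => abs_nonneg _) (summable_abs_sub _ _)
          _ ≤ h (M i ω) := key (hMnn i ω) hlam
      linarith
    have hsummable : Summable (fun j : ℕ =>
        |(∫ ω, pois (M i ω) j ∂P) - pois lam j|) := by
      exact summable_of_sum_le (c := ∫ ω, h (M i ω) ∂P) (fun j => abs_nonneg _) hsum
    exact Summable.tsum_le_of_sum_le hsummable hsum
  -- conclude by squeezing
  have htends : Tendsto (fun i => (1 / 2 : ℝ) * ∫ ω, h (M i ω) ∂P) atTop (𝓝 0) := by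
    have := (hconv H).const_mul (1 / 2 : ℝ)
    rw [hHlam, mul_zero] at this
    convert this using 2
    rfl
  refine squeeze_zero (fun i => ?_) (fun i => ?_) htends
  · have : (0:ℝ) ≤ ∑' j : ℕ,
        |(∫ ω, pois (M i ω) j ∂P) - pois lam j| :=
      tsum_nonneg fun j => abs_nonneg _
    linarith
  · have := hbound i
    linarith
end

section
/- Let w_in, w_out : ℕ → (0,∞) be a fixed weight sequence and (L_N)_{N ∈ ℕ} positive reals with L_N → ∞, (1/L_N) Σ_{u=1}^N w_in u → 1 and (1/L_N) Σ_{u=1}^N w_out u → 1 as N → ∞. Fix k ∈ ℕ and distinct vertices v(1), …, v(k) ∈ ℕ. For each N ≥ max_i v(i), let (E_N(v,u))_{v,u ∈ [N]} be independent with E_N(v,u) ~ Poisson(w_out v · w_in u / L_N), and set D_in^N(v) = Σ_{u ∈ [N], u ≠ v} E_N(u,v) and D_out^N(v) = Σ_{u ∈ [N], u ≠ v} E_N(v,u). Then the joint law of ((D_in^N(v(1)), D_out^N(v(1))), …, (D_in^N(v(k)), D_out^N(v(k)))) on ℕ^{2k} converges weakly, as N → ∞, to the product measure ⊗_{i=1}^k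 ( Poisson(w_in v(i)) ⊗ Poisson(w_out v(i)) ); in particular the 2k limiting coordinates are independent. -/
open MeasureTheory ProbabilityTheory Filter Topology
open scoped NNReal ENNReal
open Real
open scoped Nat

section AIDaux
variable {Ω : Type*} [MeasurableSpace Ω] {P : Measure Ω} [IsProbabilityMeasure P]

lemma AID.poissonMeasure_singleton (r : ℝ≥0) (n : ℕ) :
    poissonMeasure r {n} = ENNReal.ofReal (poissonPMFReal r n) := by
  rw [ProbabilityTheory.poissonMeasure_singleton]
  rfl

lemma AID.conv_real (a b : ℝ≥0) (n : ℕ) :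
    ∑ i ∈ Finset.range (n+1), poissonPMFReal a i * poissonPMFReal b (n - i)
      = poissonPMFReal (a+b) n := by
  unfold poissonPMFReal
  have hfac : ∀ m : ℕ, (m ! : ℝ) ≠ 0 := fun m => Nat.cast_ne_zero.mpr (Nat.factorial_ne_zero m)
  have key : ∀ i ∈ Finset.range (n+1),
      rexp (-↑a) * ↑a ^ i / ↑i ! * (rexp (-↑b) * ↑b ^ (n-i) / ↑(n-i)!)
        = rexp (-↑(a+b)) * ((a:ℝ) ^ i * (b:ℝ) ^ (n-i) * (n.choose i : ℝ)) / ↑n ! := by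
    intro i hi
    have hin : i ≤ n := Finset.mem_range_succ_iff.mp hi
    rw [Nat.cast_choose ℝ hin]
    push_cast
    rw [neg_add, Real.exp_add]
    have h1 : (i ! : ℝ) ≠ 0 := hfac i
    have h2 : ((n-i)! : ℝ) ≠ 0 := hfac (n-i)
    have h3 : (n ! : ℝ) ≠ 0 := hfac n
    field_simp
  rw [Finset.sum_congr rfl key]
  have : ∑ i ∈ Finset.range (n+1), rexp (-↑(a+b)) * ((a:ℝ) ^ i * (b:ℝ) ^ (n-i) * (n.choose i:ℝ)) / ↑n !
      = rexp (-↑(a+b)) * (∑ i ∈ Finset.range (n+1), (a:ℝ) ^ i * (b:ℝ) ^ (n-i) * (n.choose i:ℝ)) / ↑n ! := by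
    rw [Finset.mul_sum, Finset.sum_div]
  rw [this, ← add_pow]
  push_cast
  ring

lemma AID.point_add {X Y : Ω → ℕ} (hX : Measurable X) (hY : Measurable Y)
    (h : IndepFun X Y P) (a b : ℝ≥0)
    (hXl : ∀ m, P (X ⁻¹' {m}) = ENNReal.ofReal (poissonPMFReal a m))
    (hYl : ∀ m, P (Y ⁻¹' {m}) = ENNReal.ofReal (poissonPMFReal b m)) (n : ℕ) :
    P ((fun ω => X ω + Y ω) ⁻¹' {n}) = ENNReal.ofReal (poissonPMFReal (a+b) n) := by
  have hset : (fun ω => X ω + Y ω) ⁻¹' {n}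
      = ⋃ i ∈ Finset.range (n+1), (X ⁻¹' {i} ∩ Y ⁻¹' {n - i}) := by
    ext ω
    simp only [Set.mem_preimage, Set.mem_singleton_iff, Set.mem_iUnion, Set.mem_inter_iff,
      Finset.mem_range]
    constructor
    · intro hxy
      exact ⟨X ω, by omega, rfl, by omega⟩
    · rintro ⟨i, hi, h1, h2⟩
      omega
  rw [hset, measure_biUnion_finset]
  · have : ∀ i ∈ Finset.range (n+1), P (X ⁻¹' {i} ∩ Y ⁻¹' {n - i})
        = ENNReal.ofReal (poissonPMFReal a i * poissonPMFReal b (n - i)) := by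
      intro i _
      rw [h.measure_inter_preimage_eq_mul _ _ (measurableSet_singleton _)
        (measurableSet_singleton _), hXl, hYl,
        ← ENNReal.ofReal_mul poissonPMFReal_nonneg]
    rw [Finset.sum_congr rfl this, ← ENNReal.ofReal_sum_of_nonneg
      (fun i _ => mul_nonneg poissonPMFReal_nonneg poissonPMFReal_nonneg), AID.conv_real]
  · intro i _ j _ hij
    refine Disjoint.mono (Set.inter_subset_left) (Set.inter_subset_left) ?_
    simp only [Set.disjoint_left, Set.mem_preimage, Set.mem_singleton_iff]
    intro ω h1 h2; exact hij (h1 ▸ h2 ▸ rfl)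
  · intro i _
    exact ((hX (measurableSet_singleton _))).inter (hY (measurableSet_singleton _))

lemma AID.point_const_zero (n : ℕ) :
    P ((fun _ : Ω => (0:ℕ)) ⁻¹' {n}) = ENNReal.ofReal (poissonPMFReal 0 n) := by
  unfold poissonPMFReal
  rcases Nat.eq_zero_or_pos n with rfl | hn
  · simp [Set.preimage_const_of_mem]
  · have : (fun _ : Ω => (0:ℕ)) ⁻¹' {n} = ∅ := by
      ext ω; simp; omega
    rw [this]
    simp [zero_pow (by omega : n ≠ 0)]

lemma AID.point_sum {ι : Type*} {X : ι → Ω → ℕ} (hmeas : ∀ i, Measurable (X i))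
    (hind : iIndepFun X P) (c : ι → ℝ≥0) (s : Finset ι)
    (hl : ∀ i ∈ s, ∀ m, P (X i ⁻¹' {m}) = ENNReal.ofReal (poissonPMFReal (c i) m)) (n : ℕ) :
    P ((fun ω => ∑ i ∈ s, X i ω) ⁻¹' {n})
      = ENNReal.ofReal (poissonPMFReal (∑ i ∈ s, c i) n) := by
  classical
  induction s using Finset.induction_on generalizing n with
  | empty => simpa using AID.point_const_zero n
  | @insert q s hq ih =>
    have hsum : ∀ m, P ((fun ω => ∑ i ∈ s, X i ω) ⁻¹' {m})
        = ENNReal.ofReal (poissonPMFReal (∑ i ∈ s, c i) m) :=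
      fun m => ih (fun i hi => hl i (Finset.mem_insert_of_mem hi)) m
    have hindep : IndepFun (X q) (fun ω => ∑ i ∈ s, X i ω) P := by
      have := (hind.indepFun_finsetSum_of_notMem hmeas hq).symm
      convert this using 1
      ext ω
      simp [Finset.sum_apply]
    have := AID.point_add (hmeas q) (by measurability) hindep (c q) (∑ i ∈ s, c i)
      (fun m => hl q (Finset.mem_insert_self q s) m) hsum n
    simp only [Finset.sum_insert hq]
    exact this

lemma AID.sum_attach_filter {ι M : Type*} [AddCommMonoid M] (s : Finset ι)
    (Q : ι → Prop) [DecidablePred Q] (g : ι → M) :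
    ∑ p ∈ s.attach.filter (fun p => Q p.1), g p.1 = ∑ p ∈ s.filter Q, g p := by
  rw [Finset.sum_filter, Finset.sum_filter,
    Finset.sum_attach s (fun x => if Q x then g x else 0)]

lemma AID.blocks {ι κ : Type*} [DecidableEq ι] [DecidableEq κ] {X : ι → Ω → ℕ}
    (hmeas : ∀ i, Measurable (X i)) (hind : iIndepFun X P)
    (t : κ → Finset ι) (hdisj : ∀ j j', j ≠ j' → Disjoint (t j) (t j'))
    (n : κ → ℕ) (S : Finset κ) :
    P (⋂ j ∈ S, (fun ω => ∑ p ∈ t j, X p ω) ⁻¹' {n j})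
      = ∏ j ∈ S, P ((fun ω => ∑ p ∈ t j, X p ω) ⁻¹' {n j}) := by
  classical
  induction S using Finset.induction_on with
  | empty => simp
  | @insert q S hq ih =>
    set T : Finset ι := S.biUnion t with hT
    set tupleT : Ω → (↥T → ℕ) := fun ω p => X p.1 ω with htuple
    set sumT : κ → (↥T → ℕ) → ℕ :=
      fun j g => ∑ p ∈ T.attach.filter (fun p => p.1 ∈ t j), g p with hsumT
    have hsumTmeas : ∀ j, Measurable (sumT j) :=
      fun j => Finset.measurable_sum _ (fun p _ => measurable_pi_apply p)
    set M : Set (↥T → ℕ) := ⋂ j ∈ S, sumT j ⁻¹' {n j} with hM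
    have hMmeas : MeasurableSet M :=
      MeasurableSet.biInter S.countable_toSet
        (fun j _ => (hsumTmeas j) (measurableSet_singleton _))
    have hpre : tupleT ⁻¹' M = ⋂ j ∈ S, (fun ω => ∑ p ∈ t j, X p ω) ⁻¹' {n j} := by
      rw [hM, Set.preimage_iInter₂]
      refine Set.iInter₂_congr fun j hj => ?_
      ext ω
      simp only [Set.mem_preimage, Set.mem_singleton_iff, hsumT, htuple]
      rw [AID.sum_attach_filter T (fun p => p ∈ t j) (fun p => X p ω),
        Finset.filter_mem_eq_inter, Finset.inter_eq_right.mpr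
          (Finset.subset_biUnion_of_mem t hj)]
    have hdisjT : Disjoint (t q) T := by
      rw [hT, Finset.disjoint_biUnion_right]
      exact fun j hj => hdisj q j (fun h => hq (h ▸ hj))
    have base := hind.indepFun_finset (t q) T hdisjT hmeas
    have hsumq : Measurable (fun g : ↥(t q) → ℕ => ∑ p ∈ (t q).attach, g p) :=
      Finset.measurable_sum _ (fun p _ => measurable_pi_apply p)
    have hcomp : IndepFun (fun ω => ∑ p ∈ t q, X p ω) tupleT P := by
      have := base.comp hsumq measurable_id
      convert this using 1
      ext ω
      simp only [Function.comp_apply]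
      rw [← Finset.sum_attach (t q) (fun p => X p ω)]
      rfl
    have key := hcomp.measure_inter_preimage_eq_mul {n q} M (measurableSet_singleton _) hMmeas
    rw [Finset.set_biInter_insert, ← hpre, key, hpre, ih, Finset.prod_insert hq]

end AIDaux


set_option maxHeartbeats 2000000 in
/-- **Asymptotic independence of the conditional degrees of finitely many fixed vertices.**
Given a fixed weight sequence `w_in, w_out : ℕ → (0,∞)` and normalisations `L N → ∞` with
`(∑_{u ≤ N} w_in u) / L N → 1` and `(∑_{u ≤ N} w_out u) / L N → 1`, and, for each `N`
(large enough to contain the distinct fixed vertices `v 1, …, v k ∈ [N] = {1,…,N}`),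
independent arc counts `E N a b ~ Poisson(w_out a * w_in b / L N)` for `a, b ∈ [N]`,
the joint law of the in- and outdegrees `((D_in (v i), D_out (v i)))_{i ≤ k}` converges
weakly (here: pointwise on the countable discrete space `(Fin k → ℕ × ℕ)`) to the product
measure `⊗_i (Poisson(w_in (v i)) ⊗ Poisson(w_out (v i)))`; in particular the `2k`
limiting coordinates are independent. -/
theorem asymptotic_independence_of_conditional_degrees
    {Ω : Type*} [MeasurableSpace Ω] (P : Measure Ω) [IsProbabilityMeasure P]
    (w_in w_out : ℕ → ℝ≥0) (hwin : ∀ a, 0 < w_in a) (hwout : ∀ a, 0 < w_out a)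
    (L : ℕ → ℝ≥0) (hLpos : ∀ N, 0 < L N)
    (hLinf : Tendsto (fun N => (L N : ℝ)) atTop atTop)
    (hin : Tendsto (fun N => ((∑ u ∈ Finset.Icc 1 N, w_in u : ℝ≥0) : ℝ) / (L N : ℝ))
      atTop (𝓝 1))
    (hout : Tendsto (fun N => ((∑ u ∈ Finset.Icc 1 N, w_out u : ℝ≥0) : ℝ) / (L N : ℝ))
      atTop (𝓝 1))
    (k : ℕ) (v : Fin k → ℕ) (hv1 : ∀ i, 1 ≤ v i) (hvinj : Function.Injective v)
    (E : ℕ → ℕ → ℕ → Ω → ℕ) (hEmeas : ∀ N a b, Measurable (E N a b))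
    (hEindep : ∀ N, (∀ i, v i ≤ N) → iIndepFun
      (fun p : ↥(Finset.Icc 1 N ×ˢ Finset.Icc 1 N) => E N p.val.1 p.val.2) P)
    (hElaw : ∀ N a b, (∀ i, v i ≤ N) → a ∈ Finset.Icc 1 N → b ∈ Finset.Icc 1 N →
      Measure.map (E N a b) P = poissonMeasure (w_out a * w_in b / L N)) :
    ∀ x : Fin k → ℕ × ℕ,
      Tendsto (fun N =>
          Measure.map (fun ω => fun i : Fin k =>
            ((∑ u ∈ (Finset.Icc 1 N).erase (v i), E N u (v i) ω),
             (∑ u ∈ (Finset.Icc 1 N).erase (v i), E N (v i) u ω))) P {x})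
        atTop
        (𝓝 ((Measure.pi fun i : Fin k =>
          (poissonMeasure (w_in (v i))).prod (poissonMeasure (w_out (v i)))) {x})) := by
  classical
  intro x
  -- basic objects
  set V : Finset ℕ := Finset.image v Finset.univ with hV
  have hvV : ∀ i, v i ∈ V := fun i => Finset.mem_image_of_mem v (Finset.mem_univ i)
  set M0 : ℕ := Finset.univ.sup v with hM0def
  have hM0 : ∀ N, M0 ≤ N → ∀ i, v i ≤ N :=
    fun N h i => le_trans (Finset.le_sup (Finset.mem_univ i)) h
  set R : ℕ → Finset ℕ := fun N => Finset.Icc 1 N \ V with hRdef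
  set σout : ℕ → ℝ≥0 := fun N => ∑ u ∈ R N, w_out u with hσout
  set σin : ℕ → ℝ≥0 := fun N => ∑ u ∈ R N, w_in u with hσin
  set lin : ℕ → Fin k → ℝ≥0 := fun N i => σout N * w_in (v i) / L N with hlin
  set lout : ℕ → Fin k → ℝ≥0 := fun N i => w_out (v i) * σin N / L N with hlout
  set CR : Finset (ℕ × ℕ) := (V ×ˢ V).filter (fun p => p.1 ≠ p.2) with hCR
  set δ : ℕ → ℝ := fun N => ∑ p ∈ CR, ((w_out p.1 * w_in p.2 / L N : ℝ≥0) : ℝ) with hδdef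
  set Q : ℕ → ℝ := fun N => ∏ i : Fin k,
    poissonPMFReal (lin N i) (x i).1 * poissonPMFReal (lout N i) (x i).2 with hQdef
  set Creal : ℝ := ∏ i : Fin k,
    poissonPMFReal (w_in (v i)) (x i).1 * poissonPMFReal (w_out (v i)) (x i).2 with hCrealdef
  have hQnonneg : ∀ N, 0 ≤ Q N := fun N => Finset.prod_nonneg
    (fun i _ => mul_nonneg poissonPMFReal_nonneg poissonPMFReal_nonneg)
  have hδnonneg : ∀ N, 0 ≤ δ N := fun N => Finset.sum_nonneg (fun p _ => NNReal.coe_nonneg _)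
  have hCnonneg : 0 ≤ Creal := Finset.prod_nonneg
    (fun i _ => mul_nonneg poissonPMFReal_nonneg poissonPMFReal_nonneg)
  -- measurability of the degree vector
  have hvec : ∀ N, Measurable (fun ω => fun i : Fin k =>
      ((∑ u ∈ (Finset.Icc 1 N).erase (v i), E N u (v i) ω),
       (∑ u ∈ (Finset.Icc 1 N).erase (v i), E N (v i) u ω))) := fun N =>
    measurable_pi_lambda _ (fun i =>
      ((Finset.measurable_sum _ fun u _ => hEmeas N u (v i)).prodMk
        (Finset.measurable_sum _ fun u _ => hEmeas N (v i) u)))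
  set Dev : ℕ → Set Ω := fun N => (fun ω => fun i : Fin k =>
      ((∑ u ∈ (Finset.Icc 1 N).erase (v i), E N u (v i) ω),
       (∑ u ∈ (Finset.Icc 1 N).erase (v i), E N (v i) u ω))) ⁻¹' {x} with hDev
  have hfN : ∀ N, Measure.map (fun ω => fun i : Fin k =>
      ((∑ u ∈ (Finset.Icc 1 N).erase (v i), E N u (v i) ω),
       (∑ u ∈ (Finset.Icc 1 N).erase (v i), E N (v i) u ω))) P {x} = P (Dev N) :=
    fun N => Measure.map_apply (hvec N) (measurableSet_singleton x)
  -- value of the limit measure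
  have hCval : (Measure.pi fun i : Fin k =>
      (poissonMeasure (w_in (v i))).prod (poissonMeasure (w_out (v i)))) {x}
      = ENNReal.ofReal Creal := by
    rw [← Set.univ_pi_singleton x, Measure.pi_pi, hCrealdef,
      ENNReal.ofReal_prod_of_nonneg
        (fun i _ => mul_nonneg poissonPMFReal_nonneg poissonPMFReal_nonneg)]
    refine Finset.prod_congr rfl fun i _ => ?_
    have h1 : ({x i} : Set (ℕ × ℕ)) = {(x i).1} ×ˢ {(x i).2} := by
      rw [Set.singleton_prod_singleton]
    rw [h1, Measure.prod_prod, AID.poissonMeasure_singleton, AID.poissonMeasure_singleton,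
      ENNReal.ofReal_mul poissonPMFReal_nonneg]
  -- the key quantitative estimate
  have key : ∀ N, (∀ i, v i ≤ N) →
      P (Dev N) ≤ ENNReal.ofReal (Q N) + ENNReal.ofReal (δ N) ∧
      ENNReal.ofReal (Q N) ≤ P (Dev N) + ENNReal.ofReal (δ N) := by
    intro N hN
    have hVI : V ⊆ Finset.Icc 1 N := by
      intro u hu
      rw [hV] at hu
      obtain ⟨i, -, rfl⟩ := Finset.mem_image.mp hu
      exact Finset.mem_Icc.mpr ⟨hv1 i, hN i⟩
    have hRsub : R N ⊆ Finset.Icc 1 N := by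
      simp only [hRdef]; exact Finset.sdiff_subset
    have hRV : ∀ u ∈ R N, u ∉ V := by
      simp only [hRdef]; exact fun u hu => (Finset.mem_sdiff.mp hu).2
    have hvIcc : ∀ i, v i ∈ Finset.Icc 1 N := fun i => Finset.mem_Icc.mpr ⟨hv1 i, hN i⟩
    set I : Finset (ℕ × ℕ) := Finset.Icc 1 N ×ˢ Finset.Icc 1 N with hI
    set tin : Fin k → Finset ↥I :=
      fun i => I.attach.filter (fun p => p.val.1 ∈ R N ∧ p.val.2 = v i) with htin
    set tout : Fin k → Finset ↥I :=
      fun i => I.attach.filter (fun p => p.val.2 ∈ R N ∧ p.val.1 = v i) with htout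
    set t : Fin k × Bool → Finset ↥I := fun j => if j.2 = true then tout j.1 else tin j.1 with ht
    set nn : Fin k × Bool → ℕ := fun j => if j.2 = true then (x j.1).2 else (x j.1).1 with hnn
    have hfmeas : ∀ p : ↥I, Measurable (fun ω => E N p.val.1 p.val.2 ω) :=
      fun p => hEmeas N _ _
    have hfind : iIndepFun (fun p : ↥I => E N p.val.1 p.val.2) P :=
      hEindep N hN
    have hgen : ∀ (M : Type) (_inst : AddCommMonoid M) (g : ℕ → ℕ → M) (i : Fin k),
        (∑ p ∈ tin i, g p.val.1 p.val.2 = ∑ u ∈ R N, g u (v i)) ∧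
        (∑ p ∈ tout i, g p.val.1 p.val.2 = ∑ u ∈ R N, g (v i) u) := by
      intro M _inst g i
      constructor
      · rw [htin, AID.sum_attach_filter I (fun q => q.1 ∈ R N ∧ q.2 = v i) (fun q => g q.1 q.2)]
        have hfe : I.filter (fun q => q.1 ∈ R N ∧ q.2 = v i) = (R N) ×ˢ {v i} := by
          ext q
          simp only [Finset.mem_filter, Finset.mem_product, Finset.mem_singleton, hI]
          constructor
          · rintro ⟨-, h1, h2⟩; exact ⟨h1, h2⟩
          · rintro ⟨h1, h2⟩
            exact ⟨⟨hRsub h1, h2 ▸ hvIcc i⟩, h1, h2⟩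
        rw [hfe, Finset.sum_product]
        simp
      · rw [htout, AID.sum_attach_filter I (fun q => q.2 ∈ R N ∧ q.1 = v i) (fun q => g q.1 q.2)]
        have hfe : I.filter (fun q => q.2 ∈ R N ∧ q.1 = v i) = ({v i} : Finset ℕ) ×ˢ R N := by
          ext q
          simp only [Finset.mem_filter, Finset.mem_product, Finset.mem_singleton, hI]
          constructor
          · rintro ⟨-, h1, h2⟩; exact ⟨h2, h1⟩
          · rintro ⟨h1, h2⟩
            exact ⟨⟨h1 ▸ hvIcc i, hRsub h2⟩, h2, h1⟩
        rw [hfe, Finset.sum_product]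
        simp
    have hflaw : ∀ p : ↥I, ∀ m, P ((fun ω => E N p.val.1 p.val.2 ω) ⁻¹' {m})
        = ENNReal.ofReal (poissonPMFReal (w_out p.val.1 * w_in p.val.2 / L N) m) := by
      intro p m
      have hp2 : p.val ∈ Finset.Icc 1 N ×ˢ Finset.Icc 1 N := hI ▸ p.2
      have hp := Finset.mem_product.mp hp2
      rw [← Measure.map_apply (hEmeas N _ _) (measurableSet_singleton m),
        hElaw N _ _ hN hp.1 hp.2, AID.poissonMeasure_singleton]
    have hdisjblocks : ∀ jj jj' : Fin k × Bool, jj ≠ jj' → Disjoint (t jj) (t jj') := by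
      rintro ⟨i, b⟩ ⟨i', b'⟩ hne
      rw [Finset.disjoint_left]
      intro p hp hp'
      cases b <;> cases b' <;>
        simp only [ht, htin, htout, if_true, if_false, Bool.false_eq_true, ite_true, ite_false,
          Finset.mem_filter, Finset.mem_attach, true_and] at hp hp'
      · exact (fun h : i = i' => hne (by rw [h])) (hvinj (hp.2.symm.trans hp'.2))
      · exact (hRV _ hp'.1) (hp.2 ▸ hvV i)
      · exact (hRV _ hp'.1) (hp.2 ▸ hvV i)
      · exact (fun h : i = i' => hne (by rw [h])) (hvinj (hp.2.symm.trans hp'.2))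
    have htinlaw : ∀ i m, P ((fun ω => ∑ p ∈ tin i, E N p.val.1 p.val.2 ω) ⁻¹' {m})
        = ENNReal.ofReal (poissonPMFReal (lin N i) m) := by
      intro i m
      have hps := AID.point_sum hfmeas hfind
        (fun p : ↥I => w_out p.val.1 * w_in p.val.2 / L N) (tin i)
        (fun p _ m' => hflaw p m') m
      rw [hps]
      congr 1
      have hc := (hgen ℝ≥0 inferInstance (fun a b' => w_out a * w_in b' / L N) i).1
      rw [hc, hlin, hσout, ← Finset.sum_div, ← Finset.sum_mul]
    have htoutlaw : ∀ i m, P ((fun ω => ∑ p ∈ tout i, E N p.val.1 p.val.2 ω) ⁻¹' {m})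
        = ENNReal.ofReal (poissonPMFReal (lout N i) m) := by
      intro i m
      have hps := AID.point_sum hfmeas hfind
        (fun p : ↥I => w_out p.val.1 * w_in p.val.2 / L N) (tout i)
        (fun p _ m' => hflaw p m') m
      rw [hps]
      congr 1
      have hc := (hgen ℝ≥0 inferInstance (fun a b' => w_out a * w_in b' / L N) i).2
      rw [hc, hlout, hσin, ← Finset.sum_div, ← Finset.mul_sum]
    set Aev : Set Ω := ⋂ j ∈ (Finset.univ : Finset (Fin k × Bool)),
      (fun ω => ∑ p ∈ t j, E N p.val.1 p.val.2 ω) ⁻¹' {nn j} with hAev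
    have hblocks := AID.blocks hfmeas hfind t hdisjblocks nn Finset.univ
    have hAevval : P Aev = ENNReal.ofReal (Q N) := by
      rw [hAev, hblocks, hQdef, ENNReal.ofReal_prod_of_nonneg
        (fun i _ => mul_nonneg poissonPMFReal_nonneg poissonPMFReal_nonneg),
        Fintype.prod_prod_type]
      refine Finset.prod_congr rfl fun i _ => ?_
      rw [Fintype.prod_bool]
      have e1 : t (i, true) = tout i := by simp [ht]
      have e2 : t (i, false) = tin i := by simp [ht]
      have e3 : nn (i, true) = (x i).2 := by simp [hnn]
      have e4 : nn (i, false) = (x i).1 := by simp [hnn]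
      rw [e1, e2, e3, e4, htoutlaw, htinlaw,
        ENNReal.ofReal_mul poissonPMFReal_nonneg, mul_comm]
    set G : Set Ω := ⋂ p ∈ CR, (E N p.1 p.2) ⁻¹' {0} with hG
    have hCRmem : ∀ p ∈ CR, p.1 ∈ V ∧ p.2 ∈ V ∧ p.1 ≠ p.2 := by
      intro p hp
      rw [hCR, Finset.mem_filter, Finset.mem_product] at hp
      exact ⟨hp.1.1, hp.1.2, hp.2⟩
    have hGc : P Gᶜ ≤ ENNReal.ofReal (δ N) := by
      rw [hG, Set.compl_iInter₂]
      refine le_trans (measure_biUnion_finset_le CR _) ?_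
      rw [hδdef, ENNReal.ofReal_sum_of_nonneg (fun p _ => NNReal.coe_nonneg _)]
      refine Finset.sum_le_sum fun p hp => ?_
      obtain ⟨hp1, hp2, hpne⟩ := hCRmem p hp
      have hmeas0 : MeasurableSet ((E N p.1 p.2) ⁻¹' ({0} : Set ℕ)) :=
        hEmeas N _ _ (measurableSet_singleton _)
      rw [prob_compl_eq_one_sub hmeas0]
      have hlaw0 : P ((E N p.1 p.2) ⁻¹' ({0} : Set ℕ))
          = ENNReal.ofReal (rexp (-(((w_out p.1 * w_in p.2 / L N : ℝ≥0)) : ℝ))) := by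
        rw [← Measure.map_apply (hEmeas N _ _) (measurableSet_singleton 0),
          hElaw N _ _ hN (hVI hp1) (hVI hp2), AID.poissonMeasure_singleton]
        congr 1
        simp [poissonPMFReal]
      rw [hlaw0, tsub_le_iff_right,
        ← ENNReal.ofReal_add (NNReal.coe_nonneg _) (exp_nonneg _)]
      refine ENNReal.one_le_ofReal.mpr ?_
      have hexp := Real.add_one_le_exp (-(((w_out p.1 * w_in p.2 / L N : ℝ≥0)) : ℝ))
      linarith
    have hGmem : ∀ ω ∈ G, ∀ i : Fin k,
        (∑ u ∈ (Finset.Icc 1 N).erase (v i), E N u (v i) ω = ∑ u ∈ R N, E N u (v i) ω) ∧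
        (∑ u ∈ (Finset.Icc 1 N).erase (v i), E N (v i) u ω = ∑ u ∈ R N, E N (v i) u ω) := by
      intro ω hω i
      have hzero : ∀ p ∈ CR, E N p.1 p.2 ω = 0 := by
        intro p hp
        rw [hG] at hω
        exact Set.mem_iInter₂.mp hω p hp
      have herase : (Finset.Icc 1 N).erase (v i) = R N ∪ V.erase (v i) := by
        simp only [hRdef]
        ext u
        simp only [Finset.mem_erase, Finset.mem_union, Finset.mem_sdiff]
        constructor
        · rintro ⟨hne, hu⟩
          by_cases hV' : u ∈ V
          · right; exact ⟨hne, hV'⟩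
          · left; exact ⟨hu, hV'⟩
        · rintro (⟨hu, hV'⟩ | ⟨hne, hV'⟩)
          · exact ⟨fun h => hV' (h ▸ hvV i), hu⟩
          · exact ⟨hne, hVI hV'⟩
      have hdisjRVe : Disjoint (R N) (V.erase (v i)) := by
        rw [Finset.disjoint_left]
        intro u hu hu'
        exact (hRV u hu) (Finset.mem_of_mem_erase hu')
      constructor
      · rw [herase, Finset.sum_union hdisjRVe]
        have hz : ∑ u ∈ V.erase (v i), E N u (v i) ω = 0 := by
          refine Finset.sum_eq_zero fun u hu => ?_
          refine hzero (u, v i) ?_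
          rw [hCR, Finset.mem_filter, Finset.mem_product]
          exact ⟨⟨Finset.mem_of_mem_erase hu, hvV i⟩, Finset.ne_of_mem_erase hu⟩
        rw [hz, add_zero]
      · rw [herase, Finset.sum_union hdisjRVe]
        have hz : ∑ u ∈ V.erase (v i), E N (v i) u ω = 0 := by
          refine Finset.sum_eq_zero fun u hu => ?_
          refine hzero (v i, u) ?_
          rw [hCR, Finset.mem_filter, Finset.mem_product]
          exact ⟨⟨hvV i, Finset.mem_of_mem_erase hu⟩, (Finset.ne_of_mem_erase hu).symm⟩
        rw [hz, add_zero]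
    have hDevmem : ∀ ω, ω ∈ Dev N ↔ ∀ i : Fin k,
        (∑ u ∈ (Finset.Icc 1 N).erase (v i), E N u (v i) ω = (x i).1 ∧
         ∑ u ∈ (Finset.Icc 1 N).erase (v i), E N (v i) u ω = (x i).2) := by
      intro ω
      rw [hDev]
      simp [funext_iff, Prod.ext_iff]
    have hAevmem : ∀ ω, ω ∈ Aev ↔ ∀ i : Fin k,
        (∑ p ∈ tin i, E N p.val.1 p.val.2 ω = (x i).1 ∧
         ∑ p ∈ tout i, E N p.val.1 p.val.2 ω = (x i).2) := by
      intro ω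
      rw [hAev]
      constructor
      · intro h i
        have h1 := Set.mem_iInter₂.mp h (i, false) (Finset.mem_univ _)
        have h2 := Set.mem_iInter₂.mp h (i, true) (Finset.mem_univ _)
        simp only [ht, hnn, Set.mem_preimage, Set.mem_singleton_iff, Bool.false_eq_true,
          ite_true, ite_false, if_true, if_false] at h1 h2
        exact ⟨h1, h2⟩
      · intro h
        refine Set.mem_iInter₂.mpr ?_
        rintro ⟨i, b⟩ -
        cases b
        · simpa [ht, hnn] using (h i).1
        · simpa [ht, hnn] using (h i).2
    have hsub1 : Dev N ∩ G ⊆ Aev := by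
      rintro ω ⟨hD, hG'⟩
      rw [hAevmem]
      intro i
      obtain ⟨e1, e2⟩ := (hDevmem ω).mp hD i
      obtain ⟨g1, g2⟩ := hGmem ω hG' i
      obtain ⟨c1, c2⟩ := hgen ℕ inferInstance (fun a b' => E N a b' ω) i
      exact ⟨by rw [c1, ← g1, e1], by rw [c2, ← g2, e2]⟩
    have hsub2 : Aev ∩ G ⊆ Dev N := by
      rintro ω ⟨hA, hG'⟩
      rw [hDevmem]
      intro i
      obtain ⟨e1, e2⟩ := (hAevmem ω).mp hA i
      obtain ⟨g1, g2⟩ := hGmem ω hG' i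
      obtain ⟨c1, c2⟩ := hgen ℕ inferInstance (fun a b' => E N a b' ω) i
      exact ⟨by rw [g1, ← c1, e1], by rw [g2, ← c2, e2]⟩
    have hm1 : P (Dev N) ≤ P Aev + P Gᶜ := by
      have hss : Dev N ⊆ Aev ∪ Gᶜ := by
        intro ω hω
        by_cases hg : ω ∈ G
        · exact Or.inl (hsub1 ⟨hω, hg⟩)
        · exact Or.inr hg
      exact le_trans (measure_mono hss) (measure_union_le _ _)
    have hm2 : P Aev ≤ P (Dev N) + P Gᶜ := by
      have hss : Aev ⊆ Dev N ∪ Gᶜ := by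
        intro ω hω
        by_cases hg : ω ∈ G
        · exact Or.inl (hsub2 ⟨hω, hg⟩)
        · exact Or.inr hg
      exact le_trans (measure_mono hss) (measure_union_le _ _)
    constructor
    · exact le_trans hm1 (add_le_add (le_of_eq hAevval) hGc)
    · exact le_trans (le_of_eq hAevval.symm) (le_trans hm2 (add_le_add le_rfl hGc))
  -- limits
  have hconst0 : ∀ C : ℝ, Tendsto (fun N => C / (L N : ℝ)) atTop (𝓝 0) :=
    fun C => tendsto_const_nhds.div_atTop hLinf
  have hδ0 : Tendsto δ atTop (𝓝 0) := by
    have heq : δ = fun N => (∑ p ∈ CR, ((w_out p.1 * w_in p.2 : ℝ≥0) : ℝ)) / (L N : ℝ) := by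
      funext N
      rw [hδdef, Finset.sum_div]
      refine Finset.sum_congr rfl fun p _ => ?_
      push_cast [NNReal.coe_div]
      ring
    rw [heq]
    exact hconst0 _
  have hsplit : ∀ w : ℕ → ℝ≥0,
      Tendsto (fun N => ((∑ u ∈ Finset.Icc 1 N, w u : ℝ≥0) : ℝ) / (L N : ℝ)) atTop (𝓝 1) →
      Tendsto (fun N => ((∑ u ∈ R N, w u : ℝ≥0) : ℝ) / (L N : ℝ)) atTop (𝓝 1) := by
    intro w hw
    have h2 : Tendsto (fun N => ((∑ u ∈ Finset.Icc 1 N, w u : ℝ≥0) : ℝ) / (L N : ℝ)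
        - ((∑ u ∈ V, w u : ℝ≥0) : ℝ) / (L N : ℝ)) atTop (𝓝 1) := by
      have := hw.sub (hconst0 ((∑ u ∈ V, w u : ℝ≥0) : ℝ))
      rwa [sub_zero] at this
    refine Tendsto.congr' ?_ h2
    rw [EventuallyEq, eventually_atTop]
    refine ⟨M0, fun N hN => ?_⟩
    have hVI : V ⊆ Finset.Icc 1 N := by
      intro u hu
      rw [hV] at hu
      obtain ⟨i, -, rfl⟩ := Finset.mem_image.mp hu
      exact Finset.mem_Icc.mpr ⟨hv1 i, hM0 N hN i⟩
    have hsd := Finset.sum_sdiff (f := w) hVI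
    have hcoe : ((∑ u ∈ R N, w u : ℝ≥0) : ℝ)
        = ((∑ u ∈ Finset.Icc 1 N, w u : ℝ≥0) : ℝ) - ((∑ u ∈ V, w u : ℝ≥0) : ℝ) := by
      have := congrArg NNReal.toReal hsd
      push_cast at this ⊢
      rw [hRdef]
      push_cast
      linarith
    rw [← sub_div, ← hcoe]
  have hσoutlim : Tendsto (fun N => ((σout N : ℝ≥0) : ℝ) / (L N : ℝ)) atTop (𝓝 1) :=
    hsplit w_out hout
  have hσinlim : Tendsto (fun N => ((σin N : ℝ≥0) : ℝ) / (L N : ℝ)) atTop (𝓝 1) :=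
    hsplit w_in hin
  have hFcont : ∀ m : ℕ, Continuous (fun r : ℝ≥0 => poissonPMFReal r m) := by
    intro m
    unfold poissonPMFReal
    fun_prop
  have hlinlim : ∀ i, Tendsto (fun N => lin N i) atTop (𝓝 (w_in (v i))) := by
    intro i
    refine NNReal.tendsto_coe.mp ?_
    have heq : ∀ N, ((lin N i : ℝ≥0) : ℝ) = ((σout N : ℝ≥0) : ℝ) / (L N : ℝ) * (w_in (v i) : ℝ) := by
      intro N
      rw [hlin]
      push_cast [NNReal.coe_div]
      ring
    have h2 := hσoutlim.mul_const ((w_in (v i) : ℝ≥0) : ℝ)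
    rw [one_mul] at h2
    exact (tendsto_congr heq).mpr h2
  have hloutlim : ∀ i, Tendsto (fun N => lout N i) atTop (𝓝 (w_out (v i))) := by
    intro i
    refine NNReal.tendsto_coe.mp ?_
    have heq : ∀ N, ((lout N i : ℝ≥0) : ℝ) = ((σin N : ℝ≥0) : ℝ) / (L N : ℝ) * (w_out (v i) : ℝ) := by
      intro N
      rw [hlout]
      push_cast [NNReal.coe_div]
      ring
    have h2 := hσinlim.mul_const ((w_out (v i) : ℝ≥0) : ℝ)
    rw [one_mul] at h2
    exact (tendsto_congr heq).mpr h2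
  have hQlim : Tendsto Q atTop (𝓝 Creal) := by
    rw [hQdef, hCrealdef]
    refine tendsto_finset_prod _ fun i _ => Tendsto.mul ?_ ?_
    · exact ((hFcont (x i).1).tendsto _).comp (hlinlim i)
    · exact ((hFcont (x i).2).tendsto _).comp (hloutlim i)
  -- conclusion
  simp only [hfN, hCval]
  refine (ENNReal.tendsto_toReal_iff (fun N => measure_ne_top P _) ENNReal.ofReal_ne_top).mp ?_
  rw [ENNReal.toReal_ofReal hCnonneg]
  have hbound : ∀ᶠ N in atTop, |(P (Dev N)).toReal - Q N| ≤ δ N := by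
    rw [eventually_atTop]
    refine ⟨M0, fun N hN => ?_⟩
    obtain ⟨h1, h2⟩ := key N (hM0 N hN)
    have hub : (P (Dev N)).toReal ≤ Q N + δ N := by
      have := ENNReal.toReal_mono (by finiteness) h1
      rwa [ENNReal.toReal_add ENNReal.ofReal_ne_top ENNReal.ofReal_ne_top,
        ENNReal.toReal_ofReal (hQnonneg N), ENNReal.toReal_ofReal (hδnonneg N)] at this
    have hlb : Q N ≤ (P (Dev N)).toReal + δ N := by
      have := ENNReal.toReal_mono (by finiteness) h2
      rwa [ENNReal.toReal_add (measure_ne_top P _) ENNReal.ofReal_ne_top,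
        ENNReal.toReal_ofReal (hQnonneg N), ENNReal.toReal_ofReal (hδnonneg N)] at this
    rw [abs_sub_le_iff]
    constructor <;> linarith
  have h0 : Tendsto (fun N => (P (Dev N)).toReal - Q N) atTop (𝓝 0) :=
    squeeze_zero_norm' (by simpa [Real.norm_eq_abs] using hbound) hδ0
  have := h0.add hQlim
  rw [zero_add] at this
  convert this using 2 with N
  ring
end
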